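/- arXiv:2001.05998 — 4 statements merged into one kernel-verified Lean document; each statement's English description precedes it below -/
import Mathlib

section
/- Under the setup of the previous statement (θ uniform on {1,...,K}, S with conditional law H given θ, query Q equal to the partition block containing θ), the random variables S and Q are independent if and only if every block L_j of the partition satisfies (1/|L_j|)·H·b_{L_j} = (1/K)·H·𝟙. -/
open MeasureTheory ProbabilityTheory

/-- Indicator vector of a finite set of indices. -/
noncomputable def indVec {K : ℕ} (S : Finset (Fin K)) : Fin K → ℝ :=
  fun i => if i ∈ S then 1 else 0

lemma meas_inter_preimage_finset {Ω : Type*} [MeasurableSpace Ω] (μ : Measure Ω) {K : ℕ}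
    (θ : Ω → Fin K) (hθ : Measurable θ) (A : Set Ω) (hA : MeasurableSet A)
    (s : Finset (Fin K)) :
    μ (A ∩ θ ⁻¹' ↑s) = ∑ k ∈ s, μ (A ∩ θ ⁻¹' {k}) := by
  have hU : A ∩ θ ⁻¹' ↑s = ⋃ k ∈ s, A ∩ θ ⁻¹' {k} := by
    ext ω; simp
  rw [hU, measure_biUnion_finset]
  · intro k _ k' _ hne
    refine Set.disjoint_left.mpr ?_
    rintro ω ⟨-, hk⟩ ⟨-, hk'⟩
    exact hne (by simp_all)
  · intro k _
    exact hA.inter (hθ (measurableSet_singleton k))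

/-- with θ uniform, S drawn according to the columns of H given θ, and the
query equal to the partition block containing θ, the latent variable S is independent of
the query if and only if every block satisfies `(1/|L_j|)·H·b_{L_j} = (1/K)·H·𝟙`. -/
theorem lvpir_independence_iff_privacy {T K ℓ : ℕ}
    (Hm : Matrix (Fin T) (Fin K) ℝ)
    (hnn : ∀ t k, 0 ≤ Hm t k) (hcol : ∀ k, ∑ t, Hm t k = 1)
    {Ω : Type*} [MeasurableSpace Ω] (μ : Measure Ω) [IsProbabilityMeasure μ]
    (θ : Ω → Fin K) (S : Ω → Fin T)
    (hθ : Measurable θ) (hS : Measurable S)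
    (huniform : ∀ k : Fin K, μ (θ ⁻¹' {k}) = ENNReal.ofReal ((K : ℝ))⁻¹)
    (hjoint : ∀ (k : Fin K) (t : Fin T),
      μ (S ⁻¹' {t} ∩ θ ⁻¹' {k}) = ENNReal.ofReal (Hm t k) * μ (θ ⁻¹' {k}))
    (L : Fin ℓ → Finset (Fin K))
    (hLne : ∀ j, (L j).Nonempty)
    (hLdisj : ∀ j j', j ≠ j' → Disjoint (L j) (L j'))
    (hLcover : ∀ k : Fin K, ∃ j, k ∈ L j) :
    (∀ (t : Fin T) (j : Fin ℓ),
        μ (S ⁻¹' {t} ∩ θ ⁻¹' ↑(L j)) = μ (S ⁻¹' {t}) * μ (θ ⁻¹' ↑(L j)))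
      ↔ (∀ j : Fin ℓ,
          (((L j).card : ℝ))⁻¹ • Hm.mulVec (indVec (L j))
            = ((K : ℝ))⁻¹ • Hm.mulVec 1) := by
  -- K is positive
  have hΩ : Nonempty Ω := by
    by_contra h
    have h1 : μ Set.univ = 1 := measure_univ
    rw [Set.univ_eq_empty_iff.mpr (not_nonempty_iff.mp h)] at h1
    simp at h1
  have hK : 0 < K := Fin.pos (θ (Classical.arbitrary Ω))
  have hKR : (0:ℝ) < K := Nat.cast_pos.mpr hK
  -- key: joint over a finset
  have key : ∀ (t : Fin T) (s : Finset (Fin K)),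
      μ (S ⁻¹' {t} ∩ θ ⁻¹' ↑s) = ENNReal.ofReal ((K:ℝ)⁻¹ * ∑ k ∈ s, Hm t k) := by
    intro t s
    rw [meas_inter_preimage_finset μ θ hθ _ (hS (measurableSet_singleton t))]
    rw [Finset.mul_sum, ENNReal.ofReal_sum_of_nonneg
      (fun k _ => mul_nonneg (inv_nonneg.mpr hKR.le) (hnn t k))]
    refine Finset.sum_congr rfl fun k _ => ?_
    rw [hjoint k t, huniform k, ← ENNReal.ofReal_mul (hnn t k)]
    ring_nf
  -- marginal of S
  have keyS : ∀ t : Fin T,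
      μ (S ⁻¹' {t}) = ENNReal.ofReal ((K:ℝ)⁻¹ * ∑ k, Hm t k) := by
    intro t
    have : S ⁻¹' {t} = S ⁻¹' {t} ∩ θ ⁻¹' ↑(Finset.univ : Finset (Fin K)) := by
      simp
    rw [this, key]
  -- marginal of θ on a finset
  have keyθ : ∀ s : Finset (Fin K),
      μ (θ ⁻¹' ↑s) = ENNReal.ofReal ((s.card : ℝ) * (K:ℝ)⁻¹) := by
    intro s
    have : θ ⁻¹' ↑s = Set.univ ∩ θ ⁻¹' ↑s := by simp
    rw [this, meas_inter_preimage_finset μ θ hθ _ MeasurableSet.univ]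
    simp only [Set.univ_inter]
    rw [show ((s.card : ℝ) * (K:ℝ)⁻¹) = ∑ _k ∈ s, (K:ℝ)⁻¹ by
      rw [Finset.sum_const, nsmul_eq_mul],
      ENNReal.ofReal_sum_of_nonneg (fun k _ => inv_nonneg.mpr hKR.le)]
    exact Finset.sum_congr rfl fun k _ => huniform k
  -- componentwise form of the RHS
  have mv : ∀ (t : Fin T) (j : Fin ℓ),
      Hm.mulVec (indVec (L j)) t = ∑ k ∈ L j, Hm t k := by
    intro t j
    simp only [Matrix.mulVec, dotProduct, indVec, mul_ite, mul_one, mul_zero,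
      Finset.sum_ite_mem, Finset.univ_inter]
  have mv1 : ∀ t : Fin T, Hm.mulVec 1 t = ∑ k, Hm t k := by
    intro t
    simp [Matrix.mulVec, dotProduct]
  constructor
  · intro h j
    funext t
    have h1 := h t j
    rw [key, keyS, keyθ, ← ENNReal.ofReal_mul
      (mul_nonneg (inv_nonneg.mpr hKR.le) (Finset.sum_nonneg fun k _ => hnn t k))] at h1
    have hr := (ENNReal.ofReal_eq_ofReal_iff
      (mul_nonneg (inv_nonneg.mpr hKR.le) (Finset.sum_nonneg fun k _ => hnn t k))
      (mul_nonneg (mul_nonneg (inv_nonneg.mpr hKR.le)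
        (Finset.sum_nonneg fun k _ => hnn t k))
        (mul_nonneg (Nat.cast_nonneg _) (inv_nonneg.mpr hKR.le)))).mp h1
    have hcard : (0:ℝ) < (L j).card := by
      exact_mod_cast Finset.card_pos.mpr (hLne j)
    simp only [Pi.smul_apply, smul_eq_mul, mv, mv1]
    field_simp at hr ⊢
    apply mul_right_cancel₀ hKR.ne'
    linear_combination (K:ℝ) * hr
  · intro h t j
    have h1 := congrFun (h j) t
    simp only [Pi.smul_apply, smul_eq_mul, mv, mv1] at h1
    have hcard : (0:ℝ) < (L j).card := by
      exact_mod_cast Finset.card_pos.mpr (hLne j)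
    rw [key, keyS, keyθ, ← ENNReal.ofReal_mul
      (mul_nonneg (inv_nonneg.mpr hKR.le) (Finset.sum_nonneg fun k _ => hnn t k))]
    congr 1
    field_simp at h1 ⊢
    linear_combination h1
end

section
/- If H is a T×K real matrix with full column rank, then the only partition {L_1,...,L_ℓ} of {1,...,K} satisfying (1/|L_j|)·H·b_{L_j} = (1/K)·H·𝟙 for every block L_j is the trivial partition {L_1} = {{1,...,K}}, and hence the minimum average download cost (1/K)·Σ_j |L_j|² over such partitions equals K. -/
/-- if `H` has full column rank, then the only partition of `{1,…,K}` all of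
whose blocks satisfy the latent-variable privacy condition is the trivial one, and its
average download cost `(1/K)·Σ_j |L_j|²` equals `K`. -/
theorem lvpir_full_rank_partition {T K ℓ : ℕ} (hK : 0 < K)
    (H : Matrix (Fin T) (Fin K) ℝ)
    (hrank : LinearIndependent ℝ (Matrix.transpose H))
    (L : Fin ℓ → Finset (Fin K))
    (hLne : ∀ j, (L j).Nonempty)
    (hLdisj : ∀ j j', j ≠ j' → Disjoint (L j) (L j'))
    (hLcover : ∀ k : Fin K, ∃ j, k ∈ L j)
    (hpriv : ∀ j, (((L j).card : ℝ))⁻¹ • H.mulVec (indVec (L j))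
      = ((K : ℝ))⁻¹ • H.mulVec 1) :
    ℓ = 1 ∧ (∀ j, L j = Finset.univ) ∧
      ((K : ℝ))⁻¹ * ∑ j, ((L j).card : ℝ) ^ 2 = K := by
  have hKR : (K : ℝ) ≠ 0 := Nat.cast_ne_zero.mpr hK.ne'
  have huniv : ∀ j, L j = Finset.univ := by
    intro j
    set g : Fin K → ℝ :=
      fun k => (((L j).card : ℝ))⁻¹ * indVec (L j) k - ((K : ℝ))⁻¹ with hg
    have hmul : H.mulVec g = 0 := by
      have : H.mulVec g = (((L j).card : ℝ))⁻¹ • H.mulVec (indVec (L j))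
          - ((K : ℝ))⁻¹ • H.mulVec 1 := by
        have hgeq : g = (((L j).card : ℝ))⁻¹ • indVec (L j)
            - ((K : ℝ))⁻¹ • (1 : Fin K → ℝ) := by
          funext k; simp [hg, Pi.smul_apply]
        rw [hgeq, Matrix.mulVec_sub, Matrix.mulVec_smul, Matrix.mulVec_smul]
      rw [this, hpriv j, sub_self]
    have hsum : ∑ k, g k • Matrix.transpose H k = 0 := by
      funext i
      have := congrFun hmul i
      simpa [Matrix.mulVec, dotProduct, Matrix.transpose, mul_comm] using this
    have hz := Fintype.linearIndependent_iff.mp hrank g hsum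
    have : ∀ k : Fin K, k ∈ L j := by
      intro k
      by_contra hk
      have := hz k
      simp [hg, indVec, hk] at this
      omega
    exact Finset.eq_univ_iff_forall.mpr this
  have hℓpos : 0 < ℓ := by
    obtain ⟨k⟩ := Fin.pos_iff_nonempty.mp hK
    obtain ⟨j, _⟩ := hLcover k
    exact Fin.pos_iff_nonempty.mpr ⟨j⟩
  have hℓ1 : ℓ = 1 := by
    by_contra h
    have h2 : 2 ≤ ℓ := by omega
    let j0 : Fin ℓ := ⟨0, hℓpos⟩
    let j1 : Fin ℓ := ⟨1, by omega⟩
    have hne : j0 ≠ j1 := by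
      intro hh
      have := congrArg Fin.val hh
      simp [j0, j1] at this
    have hd := hLdisj _ _ hne
    rw [huniv, huniv] at hd
    obtain ⟨k⟩ := Fin.pos_iff_nonempty.mp hK
    exact (Finset.disjoint_left.mp hd (Finset.mem_univ k)) (Finset.mem_univ k)
  refine ⟨hℓ1, huniv, ?_⟩
  subst hℓ1
  rw [Fin.sum_univ_one, huniv 0, Finset.card_univ, Fintype.card_fin]
  field_simp
end

section
/- Let H be a T×K matrix whose columns are constant on each block of a partition {G_1,...,G_P} of {1,...,K}, let ρ = gcd(|G_1|,...,|G_P|), and let M ⊆ {1,...,K} be any subset with |M ∩ G_p| = |G_p|/ρ for all p. Then M satisfies the latent-variable privacy condition (1/|M|)·H·b_M = (1/K)·H·𝟙, and |M| = K/ρ. -/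
/-- the gcd-based grouping scheme is private: if the columns of `H` are
constant on each group and `M` takes `|G_p|/ρ` indices from each group `G_p` (where
`ρ = gcd` of the group sizes), then `M` satisfies the latent-variable privacy
condition and `|M| = K/ρ`. -/
theorem lvpir_grouping_scheme {T K P : ℕ}
    (H : Matrix (Fin T) (Fin K) ℝ)
    (G : Fin P → Finset (Fin K))
    (hGne : ∀ p, (G p).Nonempty)
    (hGdisj : ∀ p p', p ≠ p' → Disjoint (G p) (G p'))
    (hGcover : ∀ k : Fin K, ∃ p, k ∈ G p)
    (hconst : ∀ p, ∀ i ∈ G p, ∀ i' ∈ G p, ∀ t, H t i = H t i')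
    (M : Finset (Fin K))
    (hM : ∀ p, (M ∩ G p).card = (G p).card / Finset.univ.gcd (fun p => (G p).card)) :
    ((M.card : ℝ))⁻¹ • H.mulVec (indVec M) = ((K : ℝ))⁻¹ • H.mulVec 1 ∧
      M.card = K / Finset.univ.gcd (fun p => (G p).card) := by
  classical
  set ρ := Finset.univ.gcd (fun p => (G p).card) with hρdef
  have hdvd : ∀ p : Fin P, ρ ∣ (G p).card := fun p =>
    Finset.gcd_dvd (Finset.mem_univ p)
  have hbiU : (Finset.univ : Finset (Fin K)) = Finset.univ.biUnion G := by
    ext k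
    simp only [Finset.mem_univ, Finset.mem_biUnion, true_iff]
    obtain ⟨p, hp⟩ := hGcover k
    refine ⟨p, ?_, hp⟩
    trivial
  have hGdisj' : ∀ p ∈ (Finset.univ : Finset (Fin P)), ∀ p' ∈ (Finset.univ : Finset (Fin P)),
      p ≠ p' → Disjoint (G p) (G p') := fun p _ p' _ h => hGdisj p p' h
  have hK : K = ∑ p, (G p).card := by
    have h := Finset.card_biUnion hGdisj'
    rw [← hbiU, Finset.card_univ, Fintype.card_fin] at h
    exact h
  have hMsplit : M = Finset.univ.biUnion (fun p => M ∩ G p) := by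
    ext k
    simp only [Finset.mem_biUnion, Finset.mem_inter, Finset.mem_univ, true_and]
    constructor
    · intro hk
      obtain ⟨p, hp⟩ := hGcover k
      exact ⟨p, hk, hp⟩
    · rintro ⟨p, hk, -⟩
      exact hk
  have hMcard : M.card = ∑ p, (G p).card / ρ := by
    rw [hMsplit, Finset.card_biUnion]
    · exact Finset.sum_congr rfl fun p _ => hM p
    · intro p _ p' _ h
      exact Disjoint.mono Finset.inter_subset_right Finset.inter_subset_right (hGdisj p p' h)
  have hρM : ρ * M.card = K := by
    have hsum : ∑ p, ρ * ((G p).card / ρ) = ∑ p, (G p).card :=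
      Finset.sum_congr rfl fun p _ => Nat.mul_div_cancel' (hdvd p)
    rw [hMcard, Finset.mul_sum, hsum]
    exact hK.symm
  have hcard : M.card = K / ρ := by
    rcases Nat.eq_zero_or_pos ρ with h0 | hpos
    · have hz : ∀ p, (G p).card = 0 := fun p =>
        Nat.eq_zero_of_zero_dvd (h0 ▸ hdvd p)
      have hM0 : M.card = 0 := by rw [hMcard]; simp [hz]
      have hK0 : K = 0 := by rw [hK]; simp [hz]
      rw [hM0, hK0]; simp
    · calc M.card = ρ * M.card / ρ := (Nat.mul_div_cancel_left _ hpos).symm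
        _ = K / ρ := by rw [hρM]
  refine ⟨?_, hcard⟩
  have hnat : ∀ p : Fin P, K * ((G p).card / ρ) = M.card * (G p).card := by
    intro p
    calc K * ((G p).card / ρ) = ρ * M.card * ((G p).card / ρ) := by rw [hρM]
      _ = M.card * (ρ * ((G p).card / ρ)) := by ring
      _ = M.card * (G p).card := by rw [Nat.mul_div_cancel' (hdvd p)]
  funext t
  have hsumM : ∑ i ∈ M, H t i = ∑ p, (((G p).card / ρ : ℕ) : ℝ) * H t (hGne p).choose := by
    rw [hMsplit, Finset.sum_biUnion (fun p _ p' _ h =>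
      Disjoint.mono Finset.inter_subset_right Finset.inter_subset_right (hGdisj p p' h))]
    refine Finset.sum_congr rfl fun p _ => ?_
    have heq : ∀ i ∈ M ∩ G p, H t i = H t (hGne p).choose := fun i hi =>
      hconst p i (Finset.mem_inter.mp hi).2 _ (hGne p).choose_spec t
    rw [Finset.sum_congr rfl heq, Finset.sum_const, hM p, nsmul_eq_mul]
  have hsumAll : ∑ i, H t i = ∑ p, (((G p).card : ℕ) : ℝ) * H t (hGne p).choose := by
    rw [hbiU, Finset.sum_biUnion hGdisj']
    refine Finset.sum_congr rfl fun p _ => ?_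
    have heq : ∀ i ∈ G p, H t i = H t (hGne p).choose := fun i hi =>
      hconst p i hi _ (hGne p).choose_spec t
    rw [Finset.sum_congr rfl heq, Finset.sum_const, nsmul_eq_mul]
  have key : (K : ℝ) * ∑ i ∈ M, H t i = (M.card : ℝ) * ∑ i, H t i := by
    rw [hsumM, hsumAll, Finset.mul_sum, Finset.mul_sum]
    refine Finset.sum_congr rfl fun p _ => ?_
    have h' : (K : ℝ) * (((G p).card / ρ : ℕ) : ℝ) = (M.card : ℝ) * ((G p).card : ℝ) := by
      exact_mod_cast congrArg (Nat.cast (R := ℝ)) (hnat p)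
    rw [← mul_assoc, ← mul_assoc, h']
  have hLHS : H.mulVec (indVec M) t = ∑ i ∈ M, H t i := by
    simp only [Matrix.mulVec, dotProduct, indVec, mul_ite, mul_one, mul_zero]
    rw [Finset.sum_ite_mem, Finset.univ_inter]
  have hRHS : H.mulVec 1 t = ∑ i, H t i := by
    simp [Matrix.mulVec, dotProduct]
  simp only [Pi.smul_apply, smul_eq_mul, hLHS, hRHS]
  rcases Nat.eq_zero_or_pos K with hK0 | hKpos
  · have hle : M.card ≤ K := by
      have := Finset.card_le_univ M
      simpa using this
    have hM0 : M.card = 0 := by omega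
    have hMe : M = ∅ := Finset.card_eq_zero.mp hM0
    have h1 : (M.card : ℝ) = 0 := by exact_mod_cast hM0
    have h2 : (K : ℝ) = 0 := by exact_mod_cast hK0
    rw [h1, h2, hMe]
    simp
  · have hMpos : 0 < M.card := by
      have h2 : 0 < ρ * M.card := by rw [hρM]; exact hKpos
      exact Nat.pos_of_ne_zero fun h => by simp [h] at h2
    have hMne : (M.card : ℝ) ≠ 0 := by exact_mod_cast hMpos.ne'
    have hKne : (K : ℝ) ≠ 0 := by positivity
    field_simp
    linarith [key]
end

section
/- Let H be the 3×4 matrix with rows (0.3, 0.1, 0.1, 0.3), (0.4, 0.2, 0.5, 0.1), (0.3, 0.7, 0.4, 0.6). Although all four columns of H are pairwise distinct (so the gcd-grouping scheme yields ρ = 1 and cost 4), the partition L_1 = {1,2}, L_2 = {3,4} satisfies (1/2)·H·b_{L_1} = (1/2)·H·b_{L_2} = (1/4)·H·𝟙 = (0.2, 0.3, 0.5)^T, achieving average download cost 2 < 4. -/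
/-- an example where the exhaustive-search scheme beats the grouping scheme:
all four columns of `H` are pairwise distinct, yet the partition `{1,2},{3,4}` satisfies
the latent-variable privacy condition with posteriors equal to the prior `(0.2,0.3,0.5)`,
achieving average download cost `2 < 4`. -/
theorem lvpir_exhaustive_beats_grouping :
    let H : Matrix (Fin 3) (Fin 4) ℝ :=
      !![0.3, 0.1, 0.1, 0.3; 0.4, 0.2, 0.5, 0.1; 0.3, 0.7, 0.4, 0.6]
    (∀ i j : Fin 4, i ≠ j → (fun t => H t i) ≠ (fun t => H t j)) ∧
    ((2 : ℝ))⁻¹ • H.mulVec (indVec ({0, 1} : Finset (Fin 4))) = ![0.2, 0.3, 0.5] ∧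
    ((2 : ℝ))⁻¹ • H.mulVec (indVec ({2, 3} : Finset (Fin 4))) = ![0.2, 0.3, 0.5] ∧
    ((4 : ℝ))⁻¹ • H.mulVec 1 = ![0.2, 0.3, 0.5] ∧
    ((4 : ℝ))⁻¹ * ((2 : ℝ) ^ 2 + (2 : ℝ) ^ 2) = 2 ∧
    (2 : ℝ) < 4 := by
  intro H
  refine ⟨?_, ?_, ?_, ?_, by norm_num, by norm_num⟩
  · intro i j hij hfun
    have h0 := congrFun hfun 0
    have h1 := congrFun hfun 1
    fin_cases i <;> fin_cases j <;> simp_all [H] <;> norm_num at *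
  · funext t
    fin_cases t <;>
      simp [H, Matrix.mulVec, dotProduct, indVec, Fin.sum_univ_four] <;> norm_num
  · funext t
    fin_cases t <;>
      simp [H, Matrix.mulVec, dotProduct, indVec, Fin.sum_univ_four] <;> norm_num
  · funext t
    fin_cases t <;>
      simp [H, Matrix.mulVec, dotProduct, Fin.sum_univ_four, Pi.one_apply] <;> norm_num
end
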